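/- If S is a subloop of a Cayley-Dickson loop Q_n with |S| > 4, then the center of S is exactly {1, -1}; if |S| ≤ 4, then S is abelian and Z(S) = S. -/

import Mathlib

/-- The underlying set of the Cayley-Dickson loop `Q n`:
`Q 0 = {±1}` (encoded as `Bool`, `false = 1`, `true = -1`) and `Q (n+1) = Q n × Bool`,
an element `(x, b)` encoding `(x, 0)` if `b = false` and `(x, 1)` if `b = true`. -/
def Q : ℕ → Type
  | 0 => Bool
  | n+1 => Q n × Bool

namespace Q

def one : ∀ n, Q n
  | 0 => false
  | n+1 => (one n, false)

def neg : ∀ n, Q n → Q n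
  | 0, x => !x
  | n+1, (x, b) => (neg n x, b)

def conj : ∀ n, Q n → Q n
  | 0, x => x
  | n+1, (x, false) => (conj n x, false)
  | n+1, (x, true) => (neg n x, true)

/-- Cayley-Dickson doubling multiplication restricted to the loop:
`(x,0)(y,0) = (xy,0)`, `(x,0)(y,1) = (yx,1)`, `(x,1)(y,0) = (xy*,1)`, `(x,1)(y,1) = (-y*x,0)`. -/
def mul : ∀ n, Q n → Q n → Q n
  | 0, x, y => xor x y
  | n+1, (x, false), (y, false) => (mul n x y, false)
  | n+1, (x, false), (y, true)  => (mul n y x, true)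
  | n+1, (x, true),  (y, false) => (mul n x (conj n y), true)
  | n+1, (x, true),  (y, true)  => (neg n (mul n (conj n y) x), false)

instance (n : ℕ) : One (Q n) := ⟨one n⟩
instance (n : ℕ) : Neg (Q n) := ⟨neg n⟩
instance (n : ℕ) : Mul (Q n) := ⟨mul n⟩
instance (n : ℕ) : Star (Q n) := ⟨conj n⟩
/-- In `Q n` the inverse of `x` is its conjugate `x*`. -/
instance (n : ℕ) : Inv (Q n) := ⟨conj n⟩

instance instDecEq : ∀ n, DecidableEq (Q n)
  | 0 => inferInstanceAs (DecidableEq Bool)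
  | n+1 => letI := instDecEq n; inferInstanceAs (DecidableEq (Q n × Bool))

instance instFintype : ∀ n, Fintype (Q n)
  | 0 => inferInstanceAs (Fintype Bool)
  | n+1 => letI := instFintype n; inferInstanceAs (Fintype (Q n × Bool))

/-- Powers in `Q n` (well defined by diassociativity). -/
def pow {n : ℕ} (x : Q n) : ℕ → Q n
  | 0 => 1
  | k+1 => x * pow x k

/-- The embedding `x ↦ (x, 0)` of `Q n` into `Q (n+1)`. -/
def up {n : ℕ} (x : Q n) : Q (n+1) := (x, false)

/-- The map `x ↦ (x, 1)` from `Q n` into `Q (n+1)`. -/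
def up1 {n : ℕ} (x : Q n) : Q (n+1) := (x, true)

/-- The commutator `[x,y]`, defined by `xy = (yx)[x,y]`. -/
def comm {n : ℕ} (x y : Q n) : Q n := (y * x)⁻¹ * (x * y)

/-- The associator `[x,y,z]`, defined by `(xy)z = (x(yz))[x,y,z]`. -/
def assoc {n : ℕ} (x y z : Q n) : Q n := (x * (y * z))⁻¹ * ((x * y) * z)

/-- A subloop of the Cayley-Dickson loop `Q n`: a subset containing `1` and closed
under multiplication and inverses (= conjugates). -/
structure Subloop (n : ℕ) where
  carrier : Set (Q n)
  one_mem : (1 : Q n) ∈ carrier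
  mul_mem : ∀ ⦃x y : Q n⦄, x ∈ carrier → y ∈ carrier → x * y ∈ carrier
  inv_mem : ∀ ⦃x : Q n⦄, x ∈ carrier → x⁻¹ ∈ carrier

/-- The subloop of `Q n` generated by a set `s`. -/
def closure (n : ℕ) (s : Set (Q n)) : Set (Q n) :=
  ⋂₀ {t : Set (Q n) | s ⊆ t ∧ (1 : Q n) ∈ t ∧
      (∀ x ∈ t, ∀ y ∈ t, x * y ∈ t) ∧ (∀ x ∈ t, x⁻¹ ∈ t)}

end Q

namespace Q

theorem conj_one : ∀ n, conj n (one n) = one n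
  | 0 => rfl
  | n+1 => by simp [conj, one, conj_one n] <;> rfl

theorem neg_neg' : ∀ n (x : Q n), neg n (neg n x) = x
  | 0, x => Bool.not_not x
  | n+1, (x, b) => by simp [neg, neg_neg' n] <;> rfl

theorem conj_neg' : ∀ n (x : Q n), conj n (neg n x) = neg n (conj n x)
  | 0, _ => rfl
  | n+1, (x, false) => by simp [neg, conj, conj_neg' n] <;> rfl
  | n+1, (x, true) => by simp [neg, conj] <;> rfl

theorem conj_conj : ∀ n (x : Q n), conj n (conj n x) = x
  | 0, _ => rfl
  | n+1, (x, false) => by simp [conj, conj_conj n] <;> rfl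
  | n+1, (x, true) => by simp [conj, neg_neg' n] <;> rfl

theorem mul_one' : ∀ n (x : Q n), mul n x (one n) = x
  | 0, x => Bool.xor_false x
  | n+1, (x, false) => by simp [mul, one, mul_one' n] <;> rfl
  | n+1, (x, true) => by simp [mul, one, conj_one, mul_one' n] <;> rfl

theorem one_mul' : ∀ n (x : Q n), mul n (one n) x = x
  | 0, x => Bool.false_xor x
  | n+1, (x, false) => by simp [mul, one, one_mul' n] <;> rfl
  | n+1, (x, true) => by simp [mul, one, mul_one' n] <;> rfl

theorem negmul : ∀ n, (∀ x y : Q n, mul n (neg n x) y = neg n (mul n x y)) ∧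
    (∀ x y : Q n, mul n x (neg n y) = neg n (mul n x y))
  | 0 => by constructor <;> intro x y <;> cases x <;> cases y <;> rfl
  | n+1 => by
    obtain ⟨ih1, ih2⟩ := negmul n
    constructor <;>
      rintro ⟨x, (_|_)⟩ ⟨y, (_|_)⟩ <;>
      simp [mul, neg, ih1, ih2, conj_neg', neg_neg' n] <;> rfl

theorem conjmul : ∀ n, (∀ x : Q n, mul n (conj n x) x = one n) ∧
    (∀ x : Q n, mul n x (conj n x) = one n)
  | 0 => ⟨fun x => Bool.xor_self x, fun x => Bool.xor_self x⟩
  | n+1 => by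
    obtain ⟨ih1, ih2⟩ := conjmul n
    constructor <;> rintro ⟨x, (_|_)⟩ <;>
      simp [mul, conj, one, ih1, ih2, (negmul n).1, (negmul n).2, conj_neg', neg_neg' n] <;> rfl

theorem one_ne_neg' : ∀ n, one n ≠ neg n (one n)
  | 0 => by decide
  | n+1 => fun h => one_ne_neg' n (congrArg Prod.fst h)

theorem neg_ne_self' : ∀ n (x : Q n), neg n x ≠ x
  | 0, x => by cases x <;> exact fun h => Bool.noConfusion h
  | n+1, (x, b) => fun h => neg_ne_self' n x (congrArg Prod.fst h)

theorem cancel : ∀ n, (∀ y a b : Q n, mul n y a = mul n y b → a = b) ∧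
    (∀ y a b : Q n, mul n a y = mul n b y → a = b)
  | 0 => by constructor <;> intro y a b <;> cases y <;> cases a <;> cases b <;> simp [mul] <;> intro _ <;> rfl
  | n+1 => by
    obtain ⟨ihl, ihr⟩ := cancel n
    have cinj : ∀ a b : Q n, conj n a = conj n b → a = b := fun a b h => by
      have h2 := congrArg (conj n) h
      rwa [conj_conj, conj_conj] at h2
    have ninj : ∀ a b : Q n, neg n a = neg n b → a = b := fun a b h => by
      have h2 := congrArg (neg n) h
      rwa [neg_neg', neg_neg'] at h2
    have pe : ∀ (a b : Q n) (c : Bool), a = b → ((a, c) : Q (n+1)) = (b, c) := by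
      intro a b c h; rw [h]
    constructor
    · rintro ⟨y, (_|_)⟩ ⟨a, (_|_)⟩ ⟨b, (_|_)⟩ h
      · exact pe _ _ _ (ihl y a b (congrArg Prod.fst h))
      · exact Bool.noConfusion (congrArg Prod.snd h)
      · exact Bool.noConfusion (congrArg Prod.snd h)
      · exact pe _ _ _ (ihr y a b (congrArg Prod.fst h))
      · exact pe _ _ _ (cinj a b (ihl y _ _ (congrArg Prod.fst h)))
      · exact Bool.noConfusion (congrArg Prod.snd h)
      · exact Bool.noConfusion (congrArg Prod.snd h)
      · exact pe _ _ _ (cinj a b (ihr y _ _ (ninj _ _ (congrArg Prod.fst h))))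
    · rintro ⟨y, (_|_)⟩ ⟨a, (_|_)⟩ ⟨b, (_|_)⟩ h
      · exact pe _ _ _ (ihr y a b (congrArg Prod.fst h))
      · exact Bool.noConfusion (congrArg Prod.snd h)
      · exact Bool.noConfusion (congrArg Prod.snd h)
      · exact pe _ _ _ (ihr (conj n y) a b (congrArg Prod.fst h))
      · exact pe _ _ _ (ihl y a b (congrArg Prod.fst h))
      · exact Bool.noConfusion (congrArg Prod.snd h)
      · exact Bool.noConfusion (congrArg Prod.snd h)
      · exact pe _ _ _ (ihl (conj n y) a b (ninj _ _ (congrArg Prod.fst h)))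

theorem sq' : ∀ n (x : Q n), x ≠ one n → x ≠ neg n (one n) → mul n x x = neg n (one n)
  | 0, x => by
    cases x
    · intro h _; exact absurd rfl h
    · intro _ h; exact absurd rfl h
  | n+1, (x, false) => fun h1 h2 => by
      simp only [mul, one, neg]
      rw [sq' n x (fun e => h1 (by simp [one, e] <;> rfl)) (fun e => h2 (by simp [one, neg, e] <;> rfl))]
  | n+1, (x, true) => fun _ _ => by
      simp [mul, one, neg, (conjmul n).1] <;> rfl

theorem conj_eq_self' : ∀ {n} {x : Q n}, conj n x = x → x = one n ∨ x = neg n (one n) := by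
  intro n x h
  by_cases h1 : x = one n
  · exact Or.inl h1
  by_cases h2 : x = neg n (one n)
  · exact Or.inr h2
  exfalso
  have hs := sq' n x h1 h2
  have ho := (conjmul n).2 x
  rw [h] at ho
  rw [hs] at ho
  exact one_ne_neg' n ho.symm

theorem conj_eq_neg' : ∀ {n} {x : Q n}, x ≠ one n → x ≠ neg n (one n) → conj n x = neg n x := by
  intro n x h1 h2
  apply (cancel n).1 x
  rw [(conjmul n).2, (negmul n).2, sq' n x h1 h2, neg_neg']

end Q

namespace Q

theorem pe {n : ℕ} {a b : Q n} (c : Bool) (h : a = b) : ((a, c) : Q (n+1)) = (b, c) := by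
  rw [h]

theorem comm_class : ∀ n (x y : Q n), mul n x y = mul n y x →
    x = one n ∨ x = neg n (one n) ∨ y = one n ∨ y = neg n (one n) ∨ y = x ∨ y = neg n x
  | 0, x, y, _ => by cases x <;> simp [one, neg] <;> exact Or.inl rfl
  | n+1, (x, false), (y, false), h => by
    have h' : mul n x y = mul n y x := congrArg Prod.fst h
    rcases comm_class n x y h' with h1 | h1 | h1 | h1 | h1 | h1
    · exact Or.inl (pe false h1)
    · exact Or.inr (Or.inl (pe false h1))
    · exact Or.inr (Or.inr (Or.inl (pe false h1)))
    · exact Or.inr (Or.inr (Or.inr (Or.inl (pe false h1))))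
    · exact Or.inr (Or.inr (Or.inr (Or.inr (Or.inl (pe false h1)))))
    · exact Or.inr (Or.inr (Or.inr (Or.inr (Or.inr (pe false h1)))))
  | n+1, (x, false), (y, true), h => by
    have h' : mul n y x = mul n y (conj n x) := congrArg Prod.fst h
    have hx : conj n x = x := ((cancel n).1 y x (conj n x) h').symm
    rcases conj_eq_self' hx with h1 | h1
    · exact Or.inl (pe false h1)
    · exact Or.inr (Or.inl (pe false h1))
  | n+1, (x, true), (y, false), h => by
    have h' : mul n x (conj n y) = mul n x y := congrArg Prod.fst h
    have hy : conj n y = y := (cancel n).1 x _ _ h'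
    rcases conj_eq_self' hy with h1 | h1
    · exact Or.inr (Or.inr (Or.inl (pe false h1)))
    · exact Or.inr (Or.inr (Or.inr (Or.inl (pe false h1))))
  | n+1, (x, true), (y, true), h => by
    have ninj : ∀ a b : Q n, neg n a = neg n b → a = b := fun a b h => by
      have h2 := congrArg (neg n) h
      rwa [neg_neg', neg_neg'] at h2
    have h0 : neg n (mul n (conj n y) x) = neg n (mul n (conj n x) y) := congrArg Prod.fst h
    have h' : mul n (conj n y) x = mul n (conj n x) y := ninj _ _ h0
    by_cases hx1 : x = one n
    · subst hx1
      rw [mul_one', conj_one, one_mul'] at h'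
      rcases conj_eq_self' h' with h1 | h1
      · exact Or.inr (Or.inr (Or.inr (Or.inr (Or.inl (pe true h1)))))
      · exact Or.inr (Or.inr (Or.inr (Or.inr (Or.inr (pe true h1)))))
    by_cases hx2 : x = neg n (one n)
    · subst hx2
      rw [conj_neg', conj_one, (negmul n).1, (negmul n).2, one_mul', mul_one'] at h'
      have hy : conj n y = y := ninj _ _ h'
      rcases conj_eq_self' hy with h1 | h1
      · exact Or.inr (Or.inr (Or.inr (Or.inr (Or.inr
          (pe true (h1.trans (neg_neg' n (one n)).symm))))))
      · exact Or.inr (Or.inr (Or.inr (Or.inr (Or.inl (pe true h1)))))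
    by_cases hy1 : y = one n
    · exfalso
      subst hy1
      rw [conj_one, one_mul', mul_one'] at h'
      rcases conj_eq_self' h'.symm with h1 | h1
      · exact hx1 h1
      · exact hx2 h1
    by_cases hy2 : y = neg n (one n)
    · exfalso
      subst hy2
      rw [conj_neg', conj_one, (negmul n).1, (negmul n).2, one_mul', mul_one'] at h'
      have hx : x = conj n x := ninj _ _ h'
      rcases conj_eq_self' hx.symm with h1 | h1
      · exact hx1 h1
      · exact hx2 h1
    · rw [conj_eq_neg' hy1 hy2, conj_eq_neg' hx1 hx2, (negmul n).1, (negmul n).1] at h'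
      have hc : mul n x y = mul n y x := (ninj _ _ h').symm
      rcases comm_class n x y hc with h1 | h1 | h1 | h1 | h1 | h1
      · exact absurd h1 hx1
      · exact absurd h1 hx2
      · exact absurd h1 hy1
      · exact absurd h1 hy2
      · exact Or.inr (Or.inr (Or.inr (Or.inr (Or.inl (pe true h1)))))
      · exact Or.inr (Or.inr (Or.inr (Or.inr (Or.inr (pe true h1)))))

end Q

namespace Q

variable {n : ℕ}

theorem Qone_mul (x : Q n) : 1 * x = x := one_mul' n x
theorem Qmul_one (x : Q n) : x * 1 = x := mul_one' n x
theorem Qneg_mul (x y : Q n) : (-x) * y = -(x * y) := (negmul n).1 x y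
theorem Qmul_neg (x y : Q n) : x * (-y) = -(x * y) := (negmul n).2 x y
theorem Qneg_neg (x : Q n) : -(-x) = x := neg_neg' n x
theorem Qneg_one_mul (x : Q n) : (-1 : Q n) * x = -x := by rw [Qneg_mul, Qone_mul]
theorem Qmul_neg_one (x : Q n) : x * (-1 : Q n) = -x := by rw [Qmul_neg, Qmul_one]
theorem Qsq {x : Q n} (h1 : x ≠ 1) (h2 : x ≠ -1) : x * x = -1 := sq' n x h1 h2
theorem Qone_ne_neg_one : (1 : Q n) ≠ -1 := one_ne_neg' n
theorem Qneg_ne_self (x : Q n) : -x ≠ x := neg_ne_self' n x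
theorem Qneg_inj {x y : Q n} (h : -x = -y) : x = y := by
  have h2 := congrArg (fun z : Q n => -z) h
  simpa only [Qneg_neg] using h2

theorem Qcomm_class (x y : Q n) (h : x * y = y * x) :
    x = 1 ∨ x = -1 ∨ y = 1 ∨ y = -1 ∨ y = x ∨ y = -x := comm_class n x y h

theorem Qassoc4 {a : Q n} (ha : a * a = -1) :
    ∀ x ∈ ({1, -1, a, -a} : Set (Q n)), ∀ y ∈ ({1, -1, a, -a} : Set (Q n)),
      ∀ z ∈ ({1, -1, a, -a} : Set (Q n)), x * (y * z) = (x * y) * z := by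
  intro x hx y hy z hz
  simp only [Set.mem_insert_iff, Set.mem_singleton_iff] at hx hy hz
  rcases hx with rfl | rfl | rfl | rfl <;> rcases hy with rfl | rfl | rfl | rfl <;>
    rcases hz with rfl | rfl | rfl | rfl <;>
    simp [Qone_mul, Qmul_one, Qneg_mul, Qmul_neg, Qneg_neg, ha]

end Q


/-- The center of a subloop `S`: elements of `S` that commute and associate with all
elements of `S`. -/
def Q.center {n : ℕ} (S : Q.Subloop n) : Set (Q n) :=
  {a ∈ S.carrier | (∀ x ∈ S.carrier, a * x = x * a) ∧
    (∀ x ∈ S.carrier, ∀ y ∈ S.carrier,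
      a * (x * y) = (a * x) * y ∧ x * (a * y) = (x * a) * y ∧ x * (y * a) = (x * y) * a)}

/-- If `S` is a subloop of `Q n` with `|S| > 4`, then `Z(S) = {1,-1}`;
if `|S| ≤ 4`, then `S` is abelian and `Z(S) = S`. -/
theorem Q.center_eq (n : ℕ) (S : Q.Subloop n) :
    (4 < S.carrier.ncard → Q.center S = {(1 : Q n), -1}) ∧
    (S.carrier.ncard ≤ 4 →
      (∀ x ∈ S.carrier, ∀ y ∈ S.carrier, x * y = y * x) ∧ Q.center S = S.carrier) := by
  classical
  constructor
  · intro h4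
    have hex : ∃ x ∈ S.carrier, x ≠ 1 ∧ x ≠ -1 := by
      by_contra hc
      push_neg at hc
      have hsub : S.carrier ⊆ ({1, -1} : Set (Q n)) := by
        intro z hz
        by_cases h1 : z = 1
        · exact Or.inl h1
        · exact Or.inr (hc z hz h1)
      have hle := Set.ncard_le_ncard hsub (Set.toFinite _)
      have i1 := Set.ncard_insert_le (1 : Q n) ({-1} : Set (Q n))
      have i2 : ({(-1 : Q n)} : Set (Q n)).ncard = 1 := Set.ncard_singleton _
      omega
    obtain ⟨w, hwS, hw1, hw2⟩ := hex
    have hm1 : (-1 : Q n) ∈ S.carrier := by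
      rw [← Q.Qsq hw1 hw2]; exact S.mul_mem hwS hwS
    ext a
    simp only [Q.center, Set.mem_setOf_eq, Set.mem_insert_iff, Set.mem_singleton_iff]
    constructor
    · rintro ⟨haS, hcomm, -⟩
      by_contra hne
      push_neg at hne
      obtain ⟨ha1, ha2⟩ := hne
      have hsub : S.carrier ⊆ ({1, -1, a, -a} : Set (Q n)) := by
        intro z hz
        rcases Q.Qcomm_class a z (hcomm z hz) with h | h | h | h | h | h
        · exact absurd h ha1
        · exact absurd h ha2
        · exact Or.inl h
        · exact Or.inr (Or.inl h)
        · exact Or.inr (Or.inr (Or.inl h))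
        · exact Or.inr (Or.inr (Or.inr h))
      have hle := Set.ncard_le_ncard hsub (Set.toFinite _)
      have i1 := Set.ncard_insert_le (1 : Q n) ({-1, a, -a} : Set (Q n))
      have i2 := Set.ncard_insert_le (-1 : Q n) ({a, -a} : Set (Q n))
      have i3 := Set.ncard_insert_le a ({-a} : Set (Q n))
      have i4 : ({(-a : Q n)} : Set (Q n)).ncard = 1 := Set.ncard_singleton _
      omega
    · rintro (rfl | rfl)
      · exact ⟨S.one_mem, fun x _ => by simp [Q.Qone_mul, Q.Qmul_one],
          fun x _ y _ => ⟨by simp [Q.Qone_mul, Q.Qmul_one], by simp [Q.Qone_mul, Q.Qmul_one],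
            by simp [Q.Qone_mul, Q.Qmul_one]⟩⟩
      · exact ⟨hm1, fun x _ => by simp [Q.Qneg_mul, Q.Qmul_neg, Q.Qone_mul, Q.Qmul_one],
          fun x _ y _ => ⟨by simp [Q.Qneg_mul, Q.Qmul_neg, Q.Qone_mul, Q.Qmul_one],
            by simp [Q.Qneg_mul, Q.Qmul_neg, Q.Qone_mul, Q.Qmul_one],
            by simp [Q.Qneg_mul, Q.Qmul_neg, Q.Qone_mul, Q.Qmul_one]⟩⟩
  · intro h4
    have habel : ∀ x ∈ S.carrier, ∀ y ∈ S.carrier, x * y = y * x := by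
      intro x hx y hy
      by_contra hne
      have hx1 : x ≠ 1 := fun e => hne (by rw [e, Q.Qone_mul, Q.Qmul_one])
      have hx2 : x ≠ -1 := fun e => hne (by rw [e]; simp [Q.Qneg_mul, Q.Qmul_neg, Q.Qone_mul, Q.Qmul_one])
      have hy1 : y ≠ 1 := fun e => hne (by rw [e, Q.Qmul_one, Q.Qone_mul])
      have hy2 : y ≠ -1 := fun e => hne (by rw [e]; simp [Q.Qneg_mul, Q.Qmul_neg, Q.Qone_mul, Q.Qmul_one])
      have hyx : y ≠ x := fun e => hne (by rw [e])
      have hynx : y ≠ -x := fun e => hne (by rw [e, Q.Qmul_neg, Q.Qneg_mul])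
      have hm1 : (-1 : Q n) ∈ S.carrier := by
        rw [← Q.Qsq hx1 hx2]; exact S.mul_mem hx hx
      have hmx : (-x : Q n) ∈ S.carrier := by
        rw [← Q.Qneg_one_mul]; exact S.mul_mem hm1 hx
      have hsub : ({1, -1, x, -x, y} : Set (Q n)) ⊆ S.carrier := by
        intro z hz
        simp only [Set.mem_insert_iff, Set.mem_singleton_iff] at hz
        rcases hz with rfl | rfl | rfl | rfl | rfl
        · exact S.one_mem
        · exact hm1
        · exact hx
        · exact hmx
        · exact hy
      have hle := Set.ncard_le_ncard hsub (Set.toFinite _)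
      have hcard : ({1, -1, x, -x, y} : Set (Q n)).ncard = 5 := by
        have d12 : (1 : Q n) ≠ -1 := Q.Qone_ne_neg_one
        have d13 : (1 : Q n) ≠ x := Ne.symm hx1
        have d14 : (1 : Q n) ≠ -x := fun e => hx2 (by rw [← Q.Qneg_neg x, ← e])
        have d15 : (1 : Q n) ≠ y := Ne.symm hy1
        have d23 : (-1 : Q n) ≠ x := Ne.symm hx2
        have d24 : (-1 : Q n) ≠ -x := fun e => hx1 (Q.Qneg_inj e).symm
        have d25 : (-1 : Q n) ≠ y := Ne.symm hy2
        have d34 : x ≠ -x := Ne.symm (Q.Qneg_ne_self x)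
        have d35 : x ≠ y := Ne.symm hyx
        have d45 : (-x : Q n) ≠ y := Ne.symm hynx
        rw [Set.ncard_insert_of_notMem (by simp [d12, d13, d14, d15]),
            Set.ncard_insert_of_notMem (by simp [d23, d24, d25]),
            Set.ncard_insert_of_notMem (by simp [d34, d35]),
            Set.ncard_insert_of_notMem (by simp [d45]),
            Set.ncard_singleton]
      omega
    refine ⟨habel, ?_⟩
    apply Set.Subset.antisymm
    · exact fun a ha => ha.1
    · intro a haS
      refine ⟨haS, fun x hx => habel a haS x hx, ?_⟩
      intro x hx y hy
      by_cases ha1 : a = 1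
      · subst ha1
        exact ⟨by simp [Q.Qone_mul, Q.Qmul_one], by simp [Q.Qone_mul, Q.Qmul_one],
          by simp [Q.Qone_mul, Q.Qmul_one]⟩
      by_cases ha2 : a = -1
      · subst ha2
        exact ⟨by simp [Q.Qneg_mul, Q.Qmul_neg, Q.Qone_mul, Q.Qmul_one],
          by simp [Q.Qneg_mul, Q.Qmul_neg, Q.Qone_mul, Q.Qmul_one],
          by simp [Q.Qneg_mul, Q.Qmul_neg, Q.Qone_mul, Q.Qmul_one]⟩
      · have haa : a * a = -1 := Q.Qsq ha1 ha2
        have classify : ∀ z ∈ S.carrier, z ∈ ({1, -1, a, -a} : Set (Q n)) := by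
          intro z hz
          rcases Q.Qcomm_class a z (habel a haS z hz) with h | h | h | h | h | h
          · exact absurd h ha1
          · exact absurd h ha2
          · simp [h]
          · simp [h]
          · simp [h]
          · simp [h]
        have haMem : a ∈ ({1, -1, a, -a} : Set (Q n)) := by simp
        exact ⟨Q.Qassoc4 haa a haMem x (classify x hx) y (classify y hy),
               Q.Qassoc4 haa x (classify x hx) a haMem y (classify y hy),
               Q.Qassoc4 haa x (classify x hx) y (classify y hy) a haMem⟩
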